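/- arXiv:1205.6786 — 2 statements merged into one kernel-verified Lean document; each statement's English description precedes it below -/
import Mathlib

section
/- Assume in addition that ν_λ(X) ≤ C₃ for π_*μ-almost every λ, for some constant C₃ > 0 (in the paper: the leaf integrals 1̂ of the constant function 1 are bounded by C₃). If f₀ is an extremal function for the p-modulus mod_p(F), then f₀ is μ-essentially bounded below by a positive constant; explicitly, f₀ ≥ (c₁/c₂)^{1/(p-1)} / C₃ μ-almost everywhere. -/
open MeasureTheory ENNReal

/-- `f` is admissible for the subfamily `S ⊆ Λ` of leaves: `f` is a nonnegative measurable
function in `L^p(μ)` whose integral over the leaf `ν l` is at least `1` for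
`π_*μ`-almost every `l ∈ S`. -/
def IsAdmissible {X Λ : Type*} [MeasurableSpace X] [MeasurableSpace Λ]
    (μ : MeasureTheory.Measure X) (ν : Λ → MeasureTheory.Measure X) (π : X → Λ) (p : ℝ)
    (S : Set Λ) (f : X → ℝ) : Prop :=
  Measurable f ∧ (∀ x, 0 ≤ f x) ∧ MemLp f (ENNReal.ofReal p) μ ∧
    ∀ᵐ l ∂(μ.map π), l ∈ S → 1 ≤ ∫⁻ x, ENNReal.ofReal (f x) ∂(ν l)

/-- The `p`-modulus of the subfamily `S ⊆ Λ` of leaves: the infimum of the `L^p(μ)`-norms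
of functions admissible for `S` (equal to `∞` when no admissible function exists). -/
noncomputable def pModulus {X Λ : Type*} [MeasurableSpace X] [MeasurableSpace Λ]
    (μ : MeasureTheory.Measure X) (ν : Λ → MeasureTheory.Measure X) (π : X → Λ) (p : ℝ)
    (S : Set Λ) : ℝ≥0∞ :=
  ⨅ (f : X → ℝ) (_ : IsAdmissible μ ν π p S f), eLpNorm f (ENNReal.ofReal p) μ

/-- `f₀` is an extremal function for the `p`-modulus of the foliation (the whole family `Λ`):
it is admissible for `Λ` and its `L^p(μ)`-norm realizes `mod_p(F)`. -/
def IsExtremal {X Λ : Type*} [MeasurableSpace X] [MeasurableSpace Λ]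
    (μ : MeasureTheory.Measure X) (ν : Λ → MeasureTheory.Measure X) (π : X → Λ) (p : ℝ)
    (f₀ : X → ℝ) : Prop :=
  IsAdmissible μ ν π p Set.univ f₀ ∧
    eLpNorm f₀ (ENNReal.ofReal p) μ = pModulus μ ν π p Set.univ

-- helper: ae equality from integral equality with a.e. le
lemma aux_ae_eq_of_le {α : Type*} [MeasurableSpace α] {ρ : Measure α} {f g : α → ℝ≥0∞}
    (hf : Measurable f) (hg : Measurable g) (hle : ∀ᵐ x ∂ρ, f x ≤ g x)
    (hint : ∫⁻ x, g x ∂ρ ≤ ∫⁻ x, f x ∂ρ) (hfin : ∫⁻ x, f x ∂ρ ≠ ∞) :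
    ∀ᵐ x ∂ρ, f x = g x := by
  have hsub : ∫⁻ x, g x - f x ∂ρ = ∫⁻ x, g x ∂ρ - ∫⁻ x, f x ∂ρ :=
    lintegral_sub hf hfin hle
  have h0 : ∫⁻ x, g x - f x ∂ρ = 0 := by
    rw [hsub]
    exact tsub_eq_zero_of_le hint
  have := (lintegral_eq_zero_iff (hg.sub hf)).mp h0
  filter_upwards [this, hle] with x hx hx'
  exact le_antisymm hx' (tsub_eq_zero_iff_le.mp hx)

-- strict convexity, real version
lemma aux_strict_real {p a b : ℝ} (hp : 1 < p) (ha : 0 ≤ a) (hb : 0 ≤ b)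
    (h : ((a + b) / 2) ^ p = (a ^ p + b ^ p) / 2) : a = b := by
  by_contra hne
  have hsc := strictConvexOn_rpow hp
  have h2 : (0:ℝ) < 1/2 := by norm_num
  have := hsc.2 (Set.mem_Ici.mpr ha) (Set.mem_Ici.mpr hb) hne h2 h2 (by norm_num)
  simp only [smul_eq_mul] at this
  rw [show (1/2 : ℝ) * a + (1/2 : ℝ) * b = (a+b)/2 by ring] at this
  rw [h] at this
  nlinarith [this]


-- convexity in ℝ≥0∞
lemma aux_convex {p : ℝ} (hp : 1 ≤ p) (a b : ℝ≥0∞) :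
    ((a + b) * 2⁻¹) ^ p ≤ (a ^ p + b ^ p) * 2⁻¹ := by
  have := ENNReal.rpow_arith_mean_le_arith_mean2_rpow 2⁻¹ 2⁻¹ a b
    (by rw [← two_mul]; simp [ENNReal.mul_inv_cancel]) hp
  calc ((a + b) * 2⁻¹) ^ p = (2⁻¹ * a + 2⁻¹ * b) ^ p := by ring_nf
    _ ≤ 2⁻¹ * a ^ p + 2⁻¹ * b ^ p := this
    _ = (a ^ p + b ^ p) * 2⁻¹ := by ring

lemma aux_strict {p : ℝ} (hp : 1 < p) {a b : ℝ≥0∞} (ha : a ≠ ∞) (hb : b ≠ ∞)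
    (h : ((a + b) * 2⁻¹) ^ p = (a ^ p + b ^ p) * 2⁻¹) : a = b := by
  have hp0 : (0:ℝ) ≤ p := by linarith
  have hap : a ^ p ≠ ∞ := ENNReal.rpow_ne_top_of_nonneg hp0 ha
  have hbp : b ^ p ≠ ∞ := ENNReal.rpow_ne_top_of_nonneg hp0 hb
  have key : ((a.toReal + b.toReal) / 2) ^ p = (a.toReal ^ p + b.toReal ^ p) / 2 := by
    have h1 : (((a + b) * 2⁻¹) ^ p).toReal = ((a.toReal + b.toReal) / 2) ^ p := by
      rw [← ENNReal.toReal_rpow, ENNReal.toReal_mul, ENNReal.toReal_add ha hb]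
      norm_num [div_eq_mul_inv]
    have h2 : (((a:ℝ≥0∞) ^ p + b ^ p) * 2⁻¹).toReal = (a.toReal ^ p + b.toReal ^ p) / 2 := by
      rw [ENNReal.toReal_mul, ENNReal.toReal_add hap hbp, ENNReal.toReal_rpow,
        ENNReal.toReal_rpow]
      norm_num [div_eq_mul_inv]
    rw [← h1, ← h2, h]
  have := aux_strict_real hp ENNReal.toReal_nonneg ENNReal.toReal_nonneg key
  exact (ENNReal.toReal_eq_toReal_iff' ha hb).mp this


lemma aux_holder {X : Type*} [MeasurableSpace X] (ρ : Measure X) {p : ℝ} (hp : 1 < p)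
    {F W : X → ℝ≥0∞} (hF : Measurable F) (hW : Measurable W)
    (hW0 : ∀ x, W x ≠ 0) (hWt : ∀ x, W x ≠ ∞)
    (hadm : 1 ≤ ∫⁻ x, F x ∂ρ) :
    (∫⁻ x, W x ^ (-(1/(p-1))) ∂ρ) ^ (1 - p) ≤ ∫⁻ x, F x ^ p * W x ∂ρ := by
  set q : ℝ := p / (p - 1) with hq
  have hp1 : (0:ℝ) < p - 1 := by linarith
  have hp0 : (0:ℝ) < p := by linarith
  have hpq : p.HolderConjugate q := Real.HolderConjugate.conjExponent hp
  set A : ℝ≥0∞ := ∫⁻ x, W x ^ (-(1/(p-1))) ∂ρ with hA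
  set B : ℝ≥0∞ := ∫⁻ x, F x ^ p * W x ∂ρ with hB
  by_cases hAtop : A = ∞
  · rw [hAtop, ENNReal.top_rpow_of_neg (by linarith)]
    exact zero_le
  by_cases hA0 : A = 0
  · exfalso
    have hae : ∀ᵐ x ∂ρ, W x ^ (-(1/(p-1))) = 0 :=
      (lintegral_eq_zero_iff (hW.pow_const _)).mp hA0
    have hfalse : ∀ᵐ x ∂ρ, False := by
      filter_upwards [hae] with x hx
      rw [ENNReal.rpow_eq_zero_iff] at hx
      rcases hx with ⟨h1, h2⟩ | ⟨h1, h2⟩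
      · linarith [neg_neg_iff_pos.mpr (one_div_pos.mpr hp1), h2]
      · exact hWt x h1
    have hρ0 : ρ = 0 := by
      have := hfalse
      rw [ae_iff] at this
      simp only [not_false_eq_true, Set.setOf_true] at this
      exact Measure.measure_univ_eq_zero.mp this
    rw [hρ0, lintegral_zero_measure] at hadm
    exact (by simp : ¬ ((1:ℝ≥0∞) ≤ 0)) hadm
  -- main case
  have key : (1:ℝ≥0∞) ≤ B ^ (1/p) * A ^ (1/q) := by
    have hH := ENNReal.lintegral_mul_le_Lp_mul_Lq ρ hpq
      ((hF.mul (hW.pow_const (1/p))).aemeasurable)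
      ((hW.pow_const (-(1/p))).aemeasurable)
    have e1 : ∀ x, (F x * W x ^ (1/p)) * (W x ^ (-(1/p))) = F x := by
      intro x
      rw [mul_assoc, ← ENNReal.rpow_add _ _ (hW0 x) (hWt x)]
      simp
    have e2 : ∀ x, (F x * W x ^ (1/p)) ^ p = F x ^ p * W x := by
      intro x
      rw [ENNReal.mul_rpow_of_nonneg _ _ (le_of_lt hp0), ← ENNReal.rpow_mul]
      congr 1
      rw [one_div, inv_mul_cancel₀ (ne_of_gt hp0), ENNReal.rpow_one]
    have e3 : ∀ x, (W x ^ (-(1/p))) ^ q = W x ^ (-(1/(p-1))) := by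
      intro x
      rw [← ENNReal.rpow_mul]
      congr 1
      field_simp [hq]
      rw [hq, div_mul_cancel₀ _ (ne_of_gt hp1)]
    calc (1:ℝ≥0∞) ≤ ∫⁻ x, F x ∂ρ := hadm
      _ = ∫⁻ x, ((fun x => F x * W x ^ (1/p)) * (fun x => W x ^ (-(1/p)))) x ∂ρ := by
          simp only [Pi.mul_apply]; exact lintegral_congr fun x => (e1 x).symm
      _ ≤ (∫⁻ x, (F x * W x ^ (1/p)) ^ p ∂ρ) ^ (1/p) * (∫⁻ x, (W x ^ (-(1/p))) ^ q ∂ρ) ^ (1/q) := hH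
      _ = B ^ (1/p) * A ^ (1/q) := by
          rw [lintegral_congr e2, lintegral_congr e3]
  -- raise to the power p
  have key2 : (1:ℝ≥0∞) ≤ B * A ^ (p - 1) := by
    have := ENNReal.rpow_le_rpow key (le_of_lt hp0)
    rw [ENNReal.one_rpow, ENNReal.mul_rpow_of_nonneg _ _ (le_of_lt hp0),
      ← ENNReal.rpow_mul, ← ENNReal.rpow_mul] at this
    rw [show (1/p) * p = 1 by field_simp, show (1/q) * p = p - 1 by rw [hq]; field_simp,
      ENNReal.rpow_one] at this
    exact this
  have hc0 : A ^ (p-1) ≠ 0 := by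
    simp [ENNReal.rpow_eq_zero_iff, hA0, hAtop]
  have hct : A ^ (p-1) ≠ ∞ := by
    simp [ENNReal.rpow_eq_top_iff, hA0, hAtop]
  have final : (A ^ (p-1))⁻¹ ≤ B := by
    calc (A ^ (p-1))⁻¹ = (A ^ (p-1))⁻¹ * 1 := (mul_one _).symm
      _ ≤ (A ^ (p-1))⁻¹ * (B * A ^ (p-1)) := by exact mul_le_mul_right key2 _
      _ = B * ((A ^ (p-1))⁻¹ * A ^ (p-1)) := by ring
      _ = B := by rw [ENNReal.inv_mul_cancel hc0 hct, mul_one]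
  rw [show (1 - p : ℝ) = -(p-1) by ring, ENNReal.rpow_neg]
  exact final

/-- if moreover the total leaf measures are bounded by C₃ for almost every leaf,
then an extremal function f₀ for the p-modulus satisfies
f₀ ≥ (c₁/c₂)^{1/(p-1)} / C₃ μ-almost everywhere. -/
theorem statement8 {X Λ : Type*} [MeasurableSpace X] [MeasurableSpace Λ]
    (μ : MeasureTheory.Measure X) [SigmaFinite μ] (ν : Λ → MeasureTheory.Measure X)
    (π : X → Λ) (hπ : Measurable π) (hν : Measurable ν)
    (hK : ∀ l : Λ, ν l {x | π x ≠ l} = 0)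
    -- the abstract coarea formula
    (σ : MeasureTheory.Measure Λ) [SigmaFinite σ]
    (c₁ c₂ : ℝ) (hc₁ : 0 < c₁) (hc₁₂ : c₁ ≤ c₂)
    (w : X → ℝ) (hw : Measurable w) (hw₁ : ∀ x, c₁ ≤ w x) (hw₂ : ∀ x, w x ≤ c₂)
    (hcoarea : ∀ h : X → ℝ≥0∞, Measurable h →
      ∫⁻ x, h x ∂μ = ∫⁻ l, (∫⁻ x, h x * ENNReal.ofReal (w x) ∂(ν l)) ∂σ)
    (p : ℝ) (hp : 1 < p)
    (C₃ : ℝ) (hC₃ : 0 < C₃)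
    (hleaf : ∀ᵐ l ∂(μ.map π), ν l Set.univ ≤ ENNReal.ofReal C₃)
    (f₀ : X → ℝ) (hf₀ : IsExtremal μ ν π p f₀) :
    ∀ᵐ x ∂μ, (c₁ / c₂) ^ (1 / (p - 1)) / C₃ ≤ f₀ x := by
  have hc₂ : 0 < c₂ := lt_of_lt_of_le hc₁ hc₁₂
  have hp1 : (0:ℝ) < p - 1 := by linarith
  have hp0 : (0:ℝ) < p := by linarith
  set β : ℝ := 1/(p-1) with hβdef
  have hβ : 0 < β := one_div_pos.mpr hp1
  set c1e : ℝ≥0∞ := ENNReal.ofReal c₁ with hc1edef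
  set c2e : ℝ≥0∞ := ENNReal.ofReal c₂ with hc2edef
  have hc1e0 : c1e ≠ 0 := by simp [hc1edef, hc₁, le_of_lt]
  have hc2e0 : c2e ≠ 0 := by simp [hc2edef, hc₂, le_of_lt]
  have hc1et : c1e ≠ ∞ := ofReal_ne_top
  have hc2et : c2e ≠ ∞ := ofReal_ne_top
  set W : X → ℝ≥0∞ := fun x => ENNReal.ofReal (w x) with hWdef
  have hWm : Measurable W := ENNReal.measurable_ofReal.comp hw
  have hW1 : ∀ x, c1e ≤ W x := fun x => ENNReal.ofReal_le_ofReal (hw₁ x)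
  have hW2 : ∀ x, W x ≤ c2e := fun x => ENNReal.ofReal_le_ofReal (hw₂ x)
  have hW0 : ∀ x, W x ≠ 0 := fun x =>
    ne_of_gt (lt_of_lt_of_le (by simpa [pos_iff_ne_zero] using hc1e0) (hW1 x))
  have hWt : ∀ x, W x ≠ ∞ := fun x => ne_top_of_le_ne_top hc2et (hW2 x)
  -- the leaf measure of W
  set wh : Λ → ℝ≥0∞ := fun l => ∫⁻ x, W x ∂ν l with hwhdef
  have hwhm : Measurable wh := (Measure.measurable_lintegral hWm).comp hν
  have hKae : ∀ l, ∀ᵐ x ∂ν l, π x = l := by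
    intro l
    rw [ae_iff]
    exact hK l
  have hwh_lb : ∀ l, c1e * ν l Set.univ ≤ wh l := by
    intro l
    calc c1e * ν l Set.univ = ∫⁻ _, c1e ∂ν l := (lintegral_const _).symm
      _ ≤ wh l := lintegral_mono hW1
  have hwh_ub : ∀ l, wh l ≤ c2e * ν l Set.univ := by
    intro l
    calc wh l ≤ ∫⁻ _, c2e ∂ν l := lintegral_mono hW2
      _ = c2e * ν l Set.univ := lintegral_const _
  -- the pushforward measure in terms of σ
  have hmap : ∀ B : Set Λ, MeasurableSet B → (μ.map π) B = ∫⁻ l in B, wh l ∂σ := by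
    intro B hB
    rw [Measure.map_apply hπ hB]
    have h1 : μ (π ⁻¹' B) = ∫⁻ x, (π ⁻¹' B).indicator (fun _ => (1:ℝ≥0∞)) x ∂μ := by
      rw [lintegral_indicator (hπ hB), setLIntegral_one]
    rw [h1, hcoarea ((π ⁻¹' B).indicator (fun _ => (1:ℝ≥0∞)))
      (measurable_const.indicator (hπ hB))]
    rw [← lintegral_indicator hB]
    apply lintegral_congr_ae
    apply Filter.Eventually.of_forall
    intro l
    show ∫⁻ x, (π ⁻¹' B).indicator (fun _ => (1:ℝ≥0∞)) x * W x ∂ν l = B.indicator wh l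
    by_cases hl : l ∈ B
    · have h2 : ∀ᵐ x ∂ν l, (π ⁻¹' B).indicator (fun _ => (1:ℝ≥0∞)) x * W x = W x := by
        filter_upwards [hKae l] with x hx
        simp [Set.indicator_of_mem, Set.mem_preimage, hx, hl]
      rw [lintegral_congr_ae h2, Set.indicator_of_mem hl]
    · have h2 : ∀ᵐ x ∂ν l, (π ⁻¹' B).indicator (fun _ => (1:ℝ≥0∞)) x * W x = 0 := by
        filter_upwards [hKae l] with x hx
        simp [Set.indicator_of_notMem, Set.mem_preimage, hx, hl]
      rw [lintegral_congr_ae h2, lintegral_zero, Set.indicator_of_notMem hl]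
  -- transfers between μ.map π and σ
  have hT1 : ∀ (Q : Λ → Prop), (∀ᵐ l ∂σ, Q l) → (∀ᵐ l ∂μ.map π, Q l) := by
    intro Q hQ
    rw [ae_iff] at hQ ⊢
    have hsub : {l | ¬ Q l} ⊆ toMeasurable σ {l | ¬ Q l} := subset_toMeasurable _ _
    refine measure_mono_null hsub ?_
    rw [hmap _ (measurableSet_toMeasurable _ _)]
    have : σ.restrict (toMeasurable σ {l | ¬ Q l}) = 0 := by
      rw [Measure.restrict_eq_zero, measure_toMeasurable]
      exact hQ
    rw [this, lintegral_zero_measure]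
  have hT2 : ∀ (Q : Λ → Prop), (∀ᵐ l ∂μ.map π, Q l) →
      (∀ᵐ l ∂σ, Q l ∨ ν l Set.univ = 0) := by
    intro Q hQ
    rw [ae_iff] at hQ
    set N := toMeasurable (μ.map π) {l | ¬ Q l} with hNdef
    have hNm : MeasurableSet N := measurableSet_toMeasurable _ _
    have hN0 : (μ.map π) N = 0 := by rw [hNdef, measure_toMeasurable]; exact hQ
    rw [hmap N hNm] at hN0
    have hwh0 : ∀ᵐ l ∂σ.restrict N, wh l = 0 :=
      (lintegral_eq_zero_iff hwhm).mp hN0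
    have hwh0' : ∀ᵐ l ∂σ, l ∈ N → wh l = 0 := (ae_restrict_iff' hNm).mp hwh0
    filter_upwards [hwh0'] with l hl
    by_cases hQl : Q l
    · exact Or.inl hQl
    · right
      have hlN : l ∈ N := subset_toMeasurable _ _ hQl
      have h0 := hl hlN
      have h00 : c1e * ν l Set.univ = 0 :=
        le_antisymm (h0 ▸ hwh_lb l) zero_le
      exact (mul_eq_zero.mp h00).resolve_left hc1e0
  have hT3 : ∀ᵐ l ∂μ.map π, ν l Set.univ ≠ 0 := by
    rw [ae_iff]
    have hZm : MeasurableSet {l | ¬ ν l Set.univ ≠ 0} := by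
      simp only [ne_eq, not_not]
      exact ((Measure.measurable_coe MeasurableSet.univ).comp hν) (measurableSet_singleton 0)
    refine measure_mono_null (subset_refl _) ?_
    rw [hmap _ hZm]
    have : ∀ᵐ l ∂σ.restrict {l | ¬ ν l Set.univ ≠ 0}, wh l = 0 := by
      rw [ae_restrict_iff' hZm]
      apply Filter.Eventually.of_forall
      intro l hl
      simp only [Set.mem_setOf_eq, ne_eq, not_not] at hl
      exact le_antisymm (le_trans (hwh_ub l) (by rw [hl, mul_zero])) zero_le
    rw [lintegral_congr_ae this, lintegral_zero]
  obtain ⟨⟨hf₀m, hf₀nn, hf₀Lp, hf₀adm⟩, hf₀ext⟩ := hf₀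
  set F : X → ℝ≥0∞ := fun x => ENNReal.ofReal (f₀ x) with hFdef
  have hFm : Measurable F := ENNReal.measurable_ofReal.comp hf₀m
  have hFt : ∀ x, F x ≠ ∞ := fun x => ofReal_ne_top
  set u : X → ℝ≥0∞ := fun x => W x ^ (-β) with hudef
  have hum : Measurable u := hWm.pow_const _
  have hrpow_anti : ∀ a b : ℝ≥0∞, a ≤ b → b ^ (-β) ≤ a ^ (-β) := by
    intro a b hab
    rw [ENNReal.rpow_neg, ENNReal.rpow_neg]
    exact ENNReal.inv_le_inv.mpr (ENNReal.rpow_le_rpow hab (le_of_lt hβ))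
  have hu_lb : ∀ x, c2e ^ (-β) ≤ u x := fun x => hrpow_anti _ _ (hW2 x)
  have hu_ub : ∀ x, u x ≤ c1e ^ (-β) := fun x => hrpow_anti _ _ (hW1 x)
  have hrc2 : c2e ^ (-β) ≠ 0 := by
    simp [ENNReal.rpow_eq_zero_iff, hc2e0, hc2et]
  have hrc1t : c1e ^ (-β) ≠ ∞ := by
    simp [ENNReal.rpow_eq_top_iff, hc1e0, hc1et]
  have hu0 : ∀ x, u x ≠ 0 := fun x h => hrc2 (le_antisymm (h ▸ hu_lb x) zero_le)
  have hut : ∀ x, u x ≠ ∞ := fun x => ne_top_of_le_ne_top hrc1t (hu_ub x)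
  set A : Λ → ℝ≥0∞ := fun l => ∫⁻ x, u x ∂ν l with hAdef
  have hAm : Measurable A := (Measure.measurable_lintegral hum).comp hν
  have hA_lb : ∀ l, c2e ^ (-β) * ν l Set.univ ≤ A l := by
    intro l
    calc c2e ^ (-β) * ν l Set.univ = ∫⁻ _, c2e ^ (-β) ∂ν l := (lintegral_const _).symm
      _ ≤ A l := lintegral_mono hu_lb
  have hA_ub : ∀ l, A l ≤ c1e ^ (-β) * ν l Set.univ := by
    intro l
    calc A l ≤ ∫⁻ _, c1e ^ (-β) ∂ν l := lintegral_mono hu_ub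
      _ = c1e ^ (-β) * ν l Set.univ := lintegral_const _
  set G : X → ℝ≥0∞ := fun x => u x / A (π x) with hGdef
  have hGm : Measurable G := hum.div (hAm.comp hπ)
  set g : X → ℝ := fun x => (G x).toReal with hgdef
  have hgm : Measurable g := hGm.ennreal_toReal
  have hgnn : ∀ x, 0 ≤ g x := fun x => ENNReal.toReal_nonneg
  set Gr : X → ℝ≥0∞ := fun x => ENNReal.ofReal (g x) with hGrdef
  have hGrm : Measurable Gr := ENNReal.measurable_ofReal.comp hgm
  have hGrt : ∀ x, Gr x ≠ ∞ := fun _ => ofReal_ne_top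
  -- the good-leaf predicate
  set P : Λ → Prop := fun l => (1 ≤ ∫⁻ x, F x ∂ν l) ∧ ν l Set.univ ≤ ENNReal.ofReal C₃ ∧
    ν l Set.univ ≠ 0 with hPdef
  have hPμ : ∀ᵐ l ∂μ.map π, P l := by
    filter_upwards [hf₀adm, hleaf, hT3] with l h1 h2 h3
    exact ⟨h1 (Set.mem_univ l), h2, h3⟩
  have hPσ : ∀ᵐ l ∂σ, P l ∨ ν l Set.univ = 0 := hT2 P hPμ
  have hgoodA : ∀ l, P l → A l ≠ 0 ∧ A l ≠ ∞ := by
    intro l hl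
    obtain ⟨-, hub, h0⟩ := hl
    constructor
    · intro h
      have h00 : c2e ^ (-β) * ν l Set.univ = 0 := le_antisymm (h ▸ hA_lb l) zero_le
      exact h0 ((mul_eq_zero.mp h00).resolve_left hrc2)
    · exact ne_top_of_le_ne_top (ENNReal.mul_ne_top hrc1t ofReal_ne_top)
        (le_trans (hA_ub l) (mul_le_mul_right hub _))
  have hGleaf : ∀ l, P l → ∀ᵐ x ∂ν l, G x = u x / A l ∧ G x ≠ ∞ ∧ Gr x = u x / A l := by
    intro l hl
    obtain ⟨hA0, hAt⟩ := hgoodA l hl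
    filter_upwards [hKae l] with x hx
    have e1 : G x = u x / A l := by rw [hGdef]; simp only []; rw [hx]
    have e2 : G x ≠ ∞ := by
      rw [e1]
      exact (ENNReal.div_lt_top (hut x) hA0).ne
    refine ⟨e1, e2, ?_⟩
    rw [hGrdef]; simp only []
    rw [hgdef]; simp only []
    rw [ENNReal.ofReal_toReal e2, e1]
  have hGint : ∀ l, P l → ∫⁻ x, Gr x ∂ν l = 1 := by
    intro l hl
    obtain ⟨hA0, hAt⟩ := hgoodA l hl
    have : ∫⁻ x, Gr x ∂ν l = ∫⁻ x, u x * (A l)⁻¹ ∂ν l := by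
      apply lintegral_congr_ae
      filter_upwards [hGleaf l hl] with x hx
      rw [hx.2.2, div_eq_mul_inv]
    rw [this, lintegral_mul_const _ hum, ENNReal.mul_inv_cancel hA0 hAt]
  -- the pointwise identity u ^ p * W = u
  have huW : ∀ x, u x ^ p * W x = u x := by
    intro x
    show (W x ^ (-β)) ^ p * W x = W x ^ (-β)
    rw [← ENNReal.rpow_mul]
    nth_rewrite 2 [← ENNReal.rpow_one (W x)]
    rw [← ENNReal.rpow_add _ _ (hW0 x) (hWt x)]
    congr 1
    rw [hβdef]
    field_simp
    ring
  have hGpW : ∀ l, P l → ∫⁻ x, Gr x ^ p * W x ∂ν l = A l ^ (1 - p) := by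
    intro l hl
    obtain ⟨hA0, hAt⟩ := hgoodA l hl
    have e : ∫⁻ x, Gr x ^ p * W x ∂ν l = ∫⁻ x, u x * ((A l) ^ p)⁻¹ ∂ν l := by
      apply lintegral_congr_ae
      filter_upwards [hGleaf l hl] with x hx
      rw [hx.2.2, ENNReal.div_rpow_of_nonneg _ _ (le_of_lt hp0), div_eq_mul_inv,
        mul_right_comm, huW x]
    rw [e, lintegral_mul_const _ hum]
    show A l * (A l ^ p)⁻¹ = A l ^ (1 - p)
    have e2 : A l * (A l ^ p)⁻¹ = A l ^ (1:ℝ) * A l ^ (-p) := by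
      rw [ENNReal.rpow_one, ENNReal.rpow_neg]
    rw [e2, ← ENNReal.rpow_add _ _ hA0 hAt]
    congr 1
  -- eLpNorm in terms of lintegral
  have hq0 : (ENNReal.ofReal p) ≠ 0 := by
    simp only [ne_eq, ENNReal.ofReal_eq_zero, not_le]; linarith
  have hqt : (ENNReal.ofReal p) ≠ ∞ := ofReal_ne_top
  have help : ∀ (h : X → ℝ), (∀ x, 0 ≤ h x) →
      eLpNorm h (ENNReal.ofReal p) μ = (∫⁻ x, ENNReal.ofReal (h x) ^ p ∂μ) ^ (1/p) := by
    intro h hh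
    rw [eLpNorm_eq_lintegral_rpow_enorm_toReal hq0 hqt, ENNReal.toReal_ofReal (le_of_lt hp0)]
    congr 1
    apply lintegral_congr
    intro x
    rw [Real.enorm_eq_ofReal (hh x)]
  -- leafwise integrals of F^p W and Gr^p W
  have hIfm : Measurable (fun l => ∫⁻ x, F x ^ p * W x ∂ν l) :=
    (Measure.measurable_lintegral ((hFm.pow_const p).mul hWm)).comp hν
  have hIgm : Measurable (fun l => ∫⁻ x, Gr x ^ p * W x ∂ν l) :=
    (Measure.measurable_lintegral ((hGrm.pow_const p).mul hWm)).comp hν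
  have hcoF : ∫⁻ x, F x ^ p ∂μ = ∫⁻ l, (∫⁻ x, F x ^ p * W x ∂ν l) ∂σ :=
    hcoarea (fun x => F x ^ p) (hFm.pow_const p)
  have hcoG : ∫⁻ x, Gr x ^ p ∂μ = ∫⁻ l, (∫⁻ x, Gr x ^ p * W x ∂ν l) ∂σ :=
    hcoarea (fun x => Gr x ^ p) (hGrm.pow_const p)
  have hIf_lb : ∀ l, P l → A l ^ (1-p) ≤ ∫⁻ x, F x ^ p * W x ∂ν l := by
    intro l hl
    exact aux_holder (ν l) hp hFm hWm hW0 hWt hl.1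
  have hIgIf : ∀ᵐ l ∂σ, (∫⁻ x, Gr x ^ p * W x ∂ν l) ≤ ∫⁻ x, F x ^ p * W x ∂ν l := by
    filter_upwards [hPσ] with l hl
    rcases hl with hl | hl
    · calc (∫⁻ x, Gr x ^ p * W x ∂ν l) = A l ^ (1-p) := hGpW l hl
        _ ≤ _ := hIf_lb l hl
    · have hν0 : ν l = 0 := Measure.measure_univ_eq_zero.mp hl
      rw [hν0, lintegral_zero_measure, lintegral_zero_measure]
  have hFint : ∫⁻ x, F x ^ p ∂μ ≠ ∞ := by
    intro hcon
    have hLp := hf₀Lp.2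
    rw [help f₀ hf₀nn] at hLp
    have hcon' : (∫⁻ x, ENNReal.ofReal (f₀ x) ^ p ∂μ) = ∞ := hcon
    rw [hcon', ENNReal.top_rpow_of_pos (by positivity : (0:ℝ) < 1/p)] at hLp
    exact (lt_irrefl _ hLp)
  have hGle : ∫⁻ x, Gr x ^ p ∂μ ≤ ∫⁻ x, F x ^ p ∂μ := by
    rw [hcoF, hcoG]
    exact lintegral_mono_ae hIgIf
  -- g is admissible
  have hgadm : IsAdmissible μ ν π p Set.univ g := by
    refine ⟨hgm, hgnn, ⟨hgm.aestronglyMeasurable, ?_⟩, ?_⟩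
    · rw [help g hgnn]
      exact ENNReal.rpow_lt_top_of_nonneg (by positivity)
        (lt_of_le_of_lt hGle hFint.lt_top).ne
    · filter_upwards [hPμ] with l hl _
      exact le_of_eq (hGint l hl).symm
  have hmodg : pModulus μ ν π p Set.univ ≤ eLpNorm g (ENNReal.ofReal p) μ := by
    rw [pModulus]
    exact iInf₂_le g hgadm
  have hnorm_le : eLpNorm g (ENNReal.ofReal p) μ ≤ eLpNorm f₀ (ENNReal.ofReal p) μ := by
    rw [help g hgnn, help f₀ hf₀nn]
    exact ENNReal.rpow_le_rpow hGle (by positivity)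
  have hnorm_eq : eLpNorm g (ENNReal.ofReal p) μ = eLpNorm f₀ (ENNReal.ofReal p) μ :=
    le_antisymm hnorm_le (hf₀ext ▸ hmodg)
  have hint_eq : ∫⁻ x, Gr x ^ p ∂μ = ∫⁻ x, F x ^ p ∂μ := by
    have h1 : ((∫⁻ x, Gr x ^ p ∂μ) ^ (1/p)) = ((∫⁻ x, F x ^ p ∂μ) ^ (1/p)) := by
      rw [← help g hgnn, ← help f₀ hf₀nn]
      exact hnorm_eq
    have h2 := congrArg (fun z : ℝ≥0∞ => z ^ p) h1
    simpa only [← ENNReal.rpow_mul, one_div, inv_mul_cancel₀ (ne_of_gt hp0),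
      ENNReal.rpow_one] using h2
  have hIgIf_eq : ∀ᵐ l ∂σ, (∫⁻ x, Gr x ^ p * W x ∂ν l) = ∫⁻ x, F x ^ p * W x ∂ν l := by
    apply aux_ae_eq_of_le hIgm hIfm hIgIf
    · rw [← hcoF, ← hcoG]
      exact le_of_eq hint_eq.symm
    · rw [← hcoG]
      exact (lt_of_le_of_lt hGle hFint.lt_top).ne
  -- the midpoint function
  set m : X → ℝ := fun x => (f₀ x + g x)/2 with hmdef
  have hmm : Measurable m := (hf₀m.add hgm).div_const 2
  have hmnn : ∀ x, 0 ≤ m x := fun x =>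
    div_nonneg (add_nonneg (hf₀nn x) (hgnn x)) (by norm_num)
  have hMr : ∀ x, ENNReal.ofReal (m x) = (F x + Gr x) * 2⁻¹ := by
    intro x
    show ENNReal.ofReal ((f₀ x + g x)/2) = _
    rw [div_eq_mul_inv, ENNReal.ofReal_mul (add_nonneg (hf₀nn x) (hgnn x)),
      ENNReal.ofReal_add (hf₀nn x) (hgnn x), ENNReal.ofReal_inv_of_pos (by norm_num : (0:ℝ) < 2),
      ENNReal.ofReal_ofNat]
  have hMrm : Measurable (fun x => ENNReal.ofReal (m x)) := ENNReal.measurable_ofReal.comp hmm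
  have htwo0 : ((2:ℝ≥0∞))⁻¹ ≠ ∞ := by simp
  have hone : ((1:ℝ≥0∞) + 1) * 2⁻¹ = 1 := by
    rw [one_add_one_eq_two, ENNReal.mul_inv_cancel (by norm_num) (by norm_num)]
  have hptw : ∀ x, ENNReal.ofReal (m x) ^ p ≤ (F x ^ p + Gr x ^ p) * 2⁻¹ := by
    intro x
    rw [hMr x]
    exact aux_convex (le_of_lt hp) _ _
  have hGrfin : ∫⁻ x, Gr x ^ p ∂μ ≠ ∞ := (lt_of_le_of_lt hGle hFint.lt_top).ne
  have hsum_ne : (∫⁻ x, F x ^ p ∂μ) + (∫⁻ x, Gr x ^ p ∂μ) ≠ ∞ :=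
    ENNReal.add_ne_top.mpr ⟨hFint, hGrfin⟩
  have hMint_le : ∫⁻ x, ENNReal.ofReal (m x) ^ p ∂μ ≤
      ((∫⁻ x, F x ^ p ∂μ) + (∫⁻ x, Gr x ^ p ∂μ)) * 2⁻¹ := by
    calc ∫⁻ x, ENNReal.ofReal (m x) ^ p ∂μ ≤ ∫⁻ x, (F x ^ p + Gr x ^ p) * 2⁻¹ ∂μ :=
        lintegral_mono hptw
      _ = ((∫⁻ x, F x ^ p ∂μ) + (∫⁻ x, Gr x ^ p ∂μ)) * 2⁻¹ := by
        rw [lintegral_mul_const (f := fun x => F x ^ p + Gr x ^ p) _ ((hFm.pow_const p).add (hGrm.pow_const p)),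
          lintegral_add_left (hFm.pow_const p)]
  have hmadm : IsAdmissible μ ν π p Set.univ m := by
    refine ⟨hmm, hmnn, ⟨hmm.aestronglyMeasurable, ?_⟩, ?_⟩
    · rw [help m hmnn]
      refine ENNReal.rpow_lt_top_of_nonneg (by positivity) ?_
      exact (lt_of_le_of_lt hMint_le
        (lt_top_iff_ne_top.mpr (ENNReal.mul_ne_top hsum_ne htwo0))).ne
    · filter_upwards [hPμ] with l hl _
      have e : ∫⁻ x, ENNReal.ofReal (m x) ∂ν l =
          ((∫⁻ x, F x ∂ν l) + (∫⁻ x, Gr x ∂ν l)) * 2⁻¹ := by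
        rw [lintegral_congr (fun x => hMr x), lintegral_mul_const (f := fun x => F x + Gr x) _ (hFm.add hGrm),
          lintegral_add_left hFm]
      rw [e, hGint l hl]
      calc (1:ℝ≥0∞) = (1 + 1) * 2⁻¹ := hone.symm
        _ ≤ ((∫⁻ x, F x ∂ν l) + 1) * 2⁻¹ := by gcongr; exact hl.1
  have hmodm : pModulus μ ν π p Set.univ ≤ eLpNorm m (ENNReal.ofReal p) μ := by
    rw [pModulus]
    exact iInf₂_le m hmadm
  have hintm_ge : ∫⁻ x, F x ^ p ∂μ ≤ ∫⁻ x, ENNReal.ofReal (m x) ^ p ∂μ := by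
    have h1 : eLpNorm f₀ (ENNReal.ofReal p) μ ≤ eLpNorm m (ENNReal.ofReal p) μ :=
      hf₀ext ▸ hmodm
    rw [help f₀ hf₀nn, help m hmnn] at h1
    have h2 := ENNReal.rpow_le_rpow h1 (le_of_lt hp0)
    simpa only [← ENNReal.rpow_mul, one_div, inv_mul_cancel₀ (ne_of_gt hp0),
      ENNReal.rpow_one] using h2
  have hintm_le : ∫⁻ x, ENNReal.ofReal (m x) ^ p ∂μ ≤ ∫⁻ x, F x ^ p ∂μ := by
    refine le_trans hMint_le ?_
    rw [hint_eq, ← two_mul, mul_comm (2:ℝ≥0∞), mul_assoc,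
      ENNReal.mul_inv_cancel (by norm_num) (by norm_num), mul_one]
  have hintm_eq : ∫⁻ x, ENNReal.ofReal (m x) ^ p ∂μ = ∫⁻ x, F x ^ p ∂μ :=
    le_antisymm hintm_le hintm_ge
  -- leafwise equality for the midpoint
  have hImm : Measurable (fun l => ∫⁻ x, ENNReal.ofReal (m x) ^ p * W x ∂ν l) :=
    (Measure.measurable_lintegral ((hMrm.pow_const p).mul hWm)).comp hν
  have hIhm : Measurable (fun l => ∫⁻ x, (F x ^ p + Gr x ^ p) * 2⁻¹ * W x ∂ν l) :=
    (Measure.measurable_lintegral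
      ((((hFm.pow_const p).add (hGrm.pow_const p)).mul measurable_const).mul hWm)).comp hν
  have hcoM : ∫⁻ x, ENNReal.ofReal (m x) ^ p ∂μ =
      ∫⁻ l, (∫⁻ x, ENNReal.ofReal (m x) ^ p * W x ∂ν l) ∂σ :=
    hcoarea (fun x => ENNReal.ofReal (m x) ^ p) (hMrm.pow_const p)
  have hIh_eq : ∀ l, (∫⁻ x, (F x ^ p + Gr x ^ p) * 2⁻¹ * W x ∂ν l) =
      ((∫⁻ x, F x ^ p * W x ∂ν l) + (∫⁻ x, Gr x ^ p * W x ∂ν l)) * 2⁻¹ := by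
    intro l
    have e : ∀ x, (F x ^ p + Gr x ^ p) * 2⁻¹ * W x =
        (F x ^ p * W x + Gr x ^ p * W x) * 2⁻¹ := by
      intro x; ring
    rw [lintegral_congr e, lintegral_mul_const (f := fun x => F x ^ p * W x + Gr x ^ p * W x) _
      (((hFm.pow_const p).mul hWm).add ((hGrm.pow_const p).mul hWm)),
      lintegral_add_left (f := fun x => F x ^ p * W x) ((hFm.pow_const p).mul hWm)]
  have hImIh : ∀ l, (∫⁻ x, ENNReal.ofReal (m x) ^ p * W x ∂ν l) ≤
      ∫⁻ x, (F x ^ p + Gr x ^ p) * 2⁻¹ * W x ∂ν l := by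
    intro l
    exact lintegral_mono fun x => mul_le_mul_left (hptw x) _
  have hIhIf : ∀ᵐ l ∂σ, (∫⁻ x, (F x ^ p + Gr x ^ p) * 2⁻¹ * W x ∂ν l) =
      ∫⁻ x, F x ^ p * W x ∂ν l := by
    filter_upwards [hIgIf_eq] with l he
    rw [hIh_eq l, he, ← two_mul, mul_comm (2:ℝ≥0∞), mul_assoc,
      ENNReal.mul_inv_cancel (by norm_num) (by norm_num), mul_one]
  have hImIh_eq : ∀ᵐ l ∂σ, (∫⁻ x, ENNReal.ofReal (m x) ^ p * W x ∂ν l) =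
      ∫⁻ x, (F x ^ p + Gr x ^ p) * 2⁻¹ * W x ∂ν l := by
    apply aux_ae_eq_of_le hImm hIhm (Filter.Eventually.of_forall hImIh)
    · rw [lintegral_congr_ae hIhIf, ← hcoF, ← hintm_eq, hcoM]
    · rw [← hcoM, hintm_eq]
      exact hFint
  have hIf_fin : ∀ᵐ l ∂σ, (∫⁻ x, F x ^ p * W x ∂ν l) ≠ ∞ := by
    have := ae_lt_top hIfm (by rw [← hcoF]; exact hFint)
    filter_upwards [this] with l hl
    exact hl.ne
  -- pointwise equality F = Gr on good leaves
  have hkey : ∀ᵐ l ∂σ, P l → (∀ᵐ x ∂ν l, F x = Gr x) := by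
    filter_upwards [hImIh_eq, hIgIf_eq, hIf_fin] with l h1 h2 h3
    intro hl
    have hfin2 : (∫⁻ x, (F x ^ p + Gr x ^ p) * 2⁻¹ * W x ∂ν l) ≠ ∞ := by
      rw [hIh_eq l, h2]
      rw [← two_mul, mul_comm (2:ℝ≥0∞), mul_assoc,
        ENNReal.mul_inv_cancel (by norm_num) (by norm_num), mul_one]
      exact h3
    have hae : ∀ᵐ x ∂ν l, ENNReal.ofReal (m x) ^ p * W x =
        (F x ^ p + Gr x ^ p) * 2⁻¹ * W x := by
      apply aux_ae_eq_of_le ((hMrm.pow_const p).mul hWm)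
        ((((hFm.pow_const p).add (hGrm.pow_const p)).mul measurable_const).mul hWm)
        (Filter.Eventually.of_forall fun x => mul_le_mul_left (hptw x) _)
      · exact le_of_eq h1.symm
      · show ∫⁻ x, ENNReal.ofReal (m x) ^ p * W x ∂ν l ≠ ∞
        rw [h1]; exact hfin2
    filter_upwards [hae] with x hx
    have hcW : ENNReal.ofReal (m x) ^ p = (F x ^ p + Gr x ^ p) * 2⁻¹ :=
      (ENNReal.mul_left_inj (hW0 x) (hWt x)).mp hx
    rw [hMr x] at hcW
    exact aux_strict hp (hFt x) (hGrt x) hcW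
  -- the lower bound constant
  set Δ : ℝ≥0∞ := c2e ^ (-β) / (c1e ^ (-β) * ENNReal.ofReal C₃) with hΔdef
  have hc1β : (0:ℝ) < c₁ ^ (-β) := Real.rpow_pos_of_pos hc₁ _
  have hc2β : (0:ℝ) < c₂ ^ (-β) := Real.rpow_pos_of_pos hc₂ _
  have hΔval : Δ.toReal = (c₁/c₂) ^ β / C₃ := by
    rw [hΔdef, hc1edef, hc2edef, ENNReal.ofReal_rpow_of_pos hc₂, ENNReal.ofReal_rpow_of_pos hc₁,
      ← ENNReal.ofReal_mul (le_of_lt hc1β), ENNReal.toReal_div,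
      ENNReal.toReal_ofReal (le_of_lt hc2β),
      ENNReal.toReal_ofReal (mul_nonneg (le_of_lt hc1β) (le_of_lt hC₃))]
    rw [Real.div_rpow (le_of_lt hc₁) (le_of_lt hc₂), Real.rpow_neg (le_of_lt hc₁),
      Real.rpow_neg (le_of_lt hc₂)]
    have h1 : (0:ℝ) < c₁ ^ β := Real.rpow_pos_of_pos hc₁ _
    have h2 : (0:ℝ) < c₂ ^ β := Real.rpow_pos_of_pos hc₂ _
    field_simp
  have hglb : ∀ l, P l → ∀ᵐ x ∂ν l, (c₁/c₂) ^ β / C₃ ≤ g x := by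
    intro l hl
    filter_upwards [hGleaf l hl] with x hx
    obtain ⟨e1, e2, e3⟩ := hx
    have hΔle : Δ ≤ G x := by
      rw [e1, hΔdef]
      exact ENNReal.div_le_div (hu_lb x) (le_trans (hA_ub l) (mul_le_mul_right hl.2.1 _))
    have := ENNReal.toReal_mono e2 hΔle
    rw [hΔval] at this
    exact this
  -- the bad set has measure zero on a.e. leaf
  have hνlE : ∀ᵐ l ∂σ, ν l {x | f₀ x < (c₁/c₂) ^ β / C₃} = 0 := by
    filter_upwards [hkey, hPσ] with l h1 h2
    rcases h2 with hl | hl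
    · have hae : ∀ᵐ x ∂ν l, ¬ (f₀ x < (c₁/c₂) ^ β / C₃) := by
        filter_upwards [h1 hl, hglb l hl] with x he hb
        have hfg : f₀ x = g x :=
          (ENNReal.ofReal_eq_ofReal_iff (hf₀nn x) (hgnn x)).mp he
        rw [hfg]
        exact not_lt.mpr hb
      have := ae_iff.mp hae
      simpa [not_not] using this
    · have : ν l = 0 := Measure.measure_univ_eq_zero.mp hl
      simp [this]
  -- conclude via the coarea formula
  have hEm : MeasurableSet {x | f₀ x < (c₁/c₂) ^ β / C₃} :=
    measurableSet_lt hf₀m measurable_const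
  rw [ae_iff]
  have hset : {x | ¬ (c₁/c₂) ^ β / C₃ ≤ f₀ x} = {x | f₀ x < (c₁/c₂) ^ β / C₃} := by
    ext x; simp [not_le]
  show μ {x | ¬ (c₁/c₂) ^ β / C₃ ≤ f₀ x} = 0
  rw [hset]
  have h0 : μ {x | f₀ x < (c₁/c₂) ^ β / C₃} =
      ∫⁻ x, ({x | f₀ x < (c₁/c₂) ^ β / C₃}).indicator (fun _ => (1:ℝ≥0∞)) x ∂μ := by
    rw [lintegral_indicator hEm, setLIntegral_one]
  rw [h0, hcoarea _ (measurable_const.indicator hEm)]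
  have hinner0 : ∀ᵐ l ∂σ,
      (∫⁻ x, ({x | f₀ x < (c₁/c₂) ^ β / C₃}).indicator (fun _ => (1:ℝ≥0∞)) x * W x ∂ν l) = 0 := by
    filter_upwards [hνlE] with l hl
    have hb : ∀ x, ({x | f₀ x < (c₁/c₂) ^ β / C₃}).indicator (fun _ => (1:ℝ≥0∞)) x * W x ≤
        ({x | f₀ x < (c₁/c₂) ^ β / C₃}).indicator (fun _ => c2e) x := by
      intro x
      by_cases hx : x ∈ {x | f₀ x < (c₁/c₂) ^ β / C₃}
      · simp only [Set.indicator_of_mem hx, one_mul]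
        exact hW2 x
      · simp [Set.indicator_of_notMem hx]
    refine le_antisymm ?_ zero_le
    calc (∫⁻ x, ({x | f₀ x < (c₁/c₂) ^ β / C₃}).indicator (fun _ => (1:ℝ≥0∞)) x * W x ∂ν l)
        ≤ ∫⁻ x, ({x | f₀ x < (c₁/c₂) ^ β / C₃}).indicator (fun _ => c2e) x ∂ν l :=
          lintegral_mono hb
      _ = c2e * ν l {x | f₀ x < (c₁/c₂) ^ β / C₃} := lintegral_indicator_const hEm c2e
      _ = 0 := by rw [hl, mul_zero]
  rw [lintegral_congr_ae hinner0, lintegral_zero]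
end

section
/- If f₀ is an extremal function for the p-modulus mod_p(F) with mod_p(F) > 0, and S ⊆ Λ is a measurable subfamily with mod_p(S) = 0, then μ(π⁻¹(S)) = 0. -/
open MeasureTheory ENNReal

/-- if f₀ is an extremal function for the p-modulus with mod_p(F) > 0, then
every measurable subfamily S ⊆ Λ with mod_p(S) = 0 satisfies μ(π⁻¹(S)) = 0. -/
theorem statement11 {X Λ : Type*} [MeasurableSpace X] [MeasurableSpace Λ]
    (μ : MeasureTheory.Measure X) [SigmaFinite μ] (ν : Λ → MeasureTheory.Measure X)
    (π : X → Λ) (hπ : Measurable π) (hν : Measurable ν)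
    (hK : ∀ l : Λ, ν l {x | π x ≠ l} = 0)
    (hH : ∀ N : Set X, MeasurableSet N → μ N = 0 → ∀ᵐ l ∂(μ.map π), ν l N = 0)
    (p : ℝ) (hp : 1 < p)
    (f₀ : X → ℝ) (hf₀ : IsExtremal μ ν π p f₀)
    (hpos : 0 < pModulus μ ν π p Set.univ)
    (S : Set Λ) (hS : MeasurableSet S) (hmod : pModulus μ ν π p S = 0) :
    μ (π ⁻¹' S) = 0 := by
  set T : Set X := π ⁻¹' S with hTdef
  have hTmeas : MeasurableSet T := hπ hS
  obtain ⟨⟨hf₀m, hf₀nn, hf₀Lp, hf₀adm⟩, hf₀norm⟩ := hf₀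
  have hp0' : (0:ℝ) < p := by linarith
  have hp1 : (1:ℝ≥0∞) ≤ ENNReal.ofReal p := by
    rw [show (1:ℝ≥0∞) = ENNReal.ofReal 1 by simp]
    exact ENNReal.ofReal_le_ofReal hp.le
  have hp0 : ENNReal.ofReal p ≠ 0 := by
    simp only [ne_eq, ENNReal.ofReal_eq_zero, not_le]; linarith
  have hptop : ENNReal.ofReal p ≠ ∞ := ENNReal.ofReal_ne_top
  have hptoReal : (ENNReal.ofReal p).toReal = p := ENNReal.toReal_ofReal hp0'.le
  -- Step 1: eLpNorm f₀ ≤ eLpNorm (Tᶜ.indicator f₀)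
  have key : eLpNorm f₀ (ENNReal.ofReal p) μ ≤
      eLpNorm (Tᶜ.indicator f₀) (ENNReal.ofReal p) μ := by
    apply ENNReal.le_of_forall_pos_le_add
    intro ε hε _
    have hlt : pModulus μ ν π p S < (ε : ℝ≥0∞) := by
      rw [hmod]; exact_mod_cast hε
    rw [pModulus, iInf_lt_iff] at hlt
    obtain ⟨g, hlt⟩ := hlt
    rw [iInf_lt_iff] at hlt
    obtain ⟨hg, hgε⟩ := hlt
    set F : X → ℝ := Tᶜ.indicator f₀ + g with hFdef
    have hFadm : IsAdmissible μ ν π p Set.univ F := by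
      refine ⟨(hf₀m.indicator hTmeas.compl).add hg.1, ?_, ?_, ?_⟩
      · intro x
        exact add_nonneg (Set.indicator_nonneg (fun y _ => hf₀nn y) x) (hg.2.1 x)
      · exact (hf₀Lp.indicator hTmeas.compl).add hg.2.2.1
      · filter_upwards [hf₀adm, hg.2.2.2] with l h1 h2
        intro _
        by_cases hlS : l ∈ S
        · refine le_trans (h2 hlS) (lintegral_mono fun x => ?_)
          exact ENNReal.ofReal_le_ofReal
            (le_add_of_nonneg_left (Set.indicator_nonneg (fun y _ => hf₀nn y) x))
        · have hae : ∀ᵐ x ∂ν l, π x = l := by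
            rw [ae_iff]
            simpa using hK l
          refine le_trans (h1 trivial) (lintegral_mono_ae ?_)
          filter_upwards [hae] with x hx
          have hxT : x ∈ Tᶜ := by
            simp only [hTdef, Set.mem_compl_iff, Set.mem_preimage, hx]
            exact hlS
          apply ENNReal.ofReal_le_ofReal
          show f₀ x ≤ Tᶜ.indicator f₀ x + g x
          rw [Set.indicator_of_mem hxT]
          exact le_add_of_nonneg_right (hg.2.1 x)
    calc eLpNorm f₀ (ENNReal.ofReal p) μ = pModulus μ ν π p Set.univ := hf₀norm
      _ ≤ eLpNorm F (ENNReal.ofReal p) μ := iInf₂_le F hFadm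
      _ ≤ eLpNorm (Tᶜ.indicator f₀) (ENNReal.ofReal p) μ +
          eLpNorm g (ENNReal.ofReal p) μ :=
        eLpNorm_add_le ((hf₀m.indicator hTmeas.compl).aestronglyMeasurable)
          hg.1.aestronglyMeasurable hp1
      _ ≤ eLpNorm (Tᶜ.indicator f₀) (ENNReal.ofReal p) μ + ε :=
        add_le_add le_rfl hgε.le
  -- Step 2: deduce ∫⁻ over T of ‖f₀‖^p is 0
  have hmeasφ : Measurable fun x => (‖f₀ x‖₊ : ℝ≥0∞) ^ p :=
    hf₀m.nnnorm.coe_nnreal_ennreal.pow_const p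
  have hind : (∫⁻ x, (‖Tᶜ.indicator f₀ x‖₊ : ℝ≥0∞) ^ p ∂μ) =
      ∫⁻ x in Tᶜ, (‖f₀ x‖₊ : ℝ≥0∞) ^ p ∂μ := by
    rw [← lintegral_indicator hTmeas.compl]
    congr 1
    funext x
    by_cases hx : x ∈ Tᶜ
    · rw [Set.indicator_of_mem hx, Set.indicator_of_mem hx]
    · rw [Set.indicator_of_notMem hx, Set.indicator_of_notMem hx]
      simp [ENNReal.zero_rpow_of_pos hp0']
  have hlintegral_le : (∫⁻ x, (‖f₀ x‖₊ : ℝ≥0∞) ^ p ∂μ) ≤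
      ∫⁻ x in Tᶜ, (‖f₀ x‖₊ : ℝ≥0∞) ^ p ∂μ := by
    rw [eLpNorm_eq_lintegral_rpow_enorm_toReal hp0 hptop,
      eLpNorm_eq_lintegral_rpow_enorm_toReal hp0 hptop, hptoReal] at key
    rw [← hind]
    exact (ENNReal.rpow_le_rpow_iff (by positivity : (0:ℝ) < 1 / p)).mp key
  have hfin : (∫⁻ x in Tᶜ, (‖f₀ x‖₊ : ℝ≥0∞) ^ p ∂μ) ≠ ∞ := by
    have h1 : (∫⁻ x, (‖f₀ x‖₊ : ℝ≥0∞) ^ p ∂μ) ≠ ∞ := by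
      intro h
      have := hf₀Lp.2
      rw [eLpNorm_eq_lintegral_rpow_enorm_toReal hp0 hptop, hptoReal, (show (∫⁻ x, ‖f₀ x‖ₑ ^ p ∂μ) = ∞ from h)] at this
      rw [ENNReal.top_rpow_of_pos (by positivity)] at this
      exact (lt_irrefl _ this).elim
    exact fun h => h1 (top_le_iff.mp (h ▸ setLIntegral_le_lintegral _ _))
  have hT0 : (∫⁻ x in T, (‖f₀ x‖₊ : ℝ≥0∞) ^ p ∂μ) = 0 := by
    have hsplit := lintegral_add_compl (fun x => (‖f₀ x‖₊ : ℝ≥0∞) ^ p) hTmeas (μ := μ)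
    have h2 : (∫⁻ x in T, (‖f₀ x‖₊ : ℝ≥0∞) ^ p ∂μ) +
        (∫⁻ x in Tᶜ, (‖f₀ x‖₊ : ℝ≥0∞) ^ p ∂μ) ≤
        0 + (∫⁻ x in Tᶜ, (‖f₀ x‖₊ : ℝ≥0∞) ^ p ∂μ) := by
      rw [zero_add, hsplit]; exact hlintegral_le
    exact le_antisymm (ENNReal.le_of_add_le_add_right hfin h2) zero_le
  -- Step 3: f₀ = 0 a.e. on T, i.e. μ N = 0 for N = T ∩ {f₀ ≠ 0}
  set N : Set X := T ∩ {x | f₀ x ≠ 0} with hNdef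
  have hNmeas : MeasurableSet N :=
    hTmeas.inter ((hf₀m (measurableSet_singleton 0)).compl)
  have hN0 : μ N = 0 := by
    have hae := (lintegral_eq_zero_iff hmeasφ).mp hT0
    have hae2 : ∀ᵐ x ∂μ, x ∈ T → f₀ x = 0 := by
      rw [← ae_restrict_iff' hTmeas]
      filter_upwards [hae] with x hx
      simp only [Pi.zero_apply, ENNReal.rpow_eq_zero_iff] at hx
      rcases hx with ⟨h, _⟩ | ⟨h, _⟩
      · simpa using h
      · exact absurd h ENNReal.coe_ne_top
    rw [ae_iff] at hae2
    convert hae2 using 2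
    ext x
    simp [hNdef, _root_.not_imp, and_comm]
  -- Step 4: conclude via hH and admissibility of f₀
  have hmap : μ (π ⁻¹' S) = (μ.map π) S := (Measure.map_apply hπ hS).symm
  rw [hmap, measure_eq_zero_iff_ae_notMem]
  filter_upwards [hH N hNmeas hN0, hf₀adm] with l hlN hl1
  intro hlS
  have h1 : (1:ℝ≥0∞) ≤ ∫⁻ x, ENNReal.ofReal (f₀ x) ∂ν l := hl1 trivial
  have h0 : (∫⁻ x, ENNReal.ofReal (f₀ x) ∂ν l) = 0 := by
    have haeπ : ∀ᵐ x ∂ν l, π x = l := by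
      rw [ae_iff]; simpa using hK l
    have haeN : ∀ᵐ x ∂ν l, x ∉ N := measure_eq_zero_iff_ae_notMem.mp hlN
    rw [← lintegral_zero (μ := ν l)]
    apply lintegral_congr_ae
    filter_upwards [haeπ, haeN] with x hx hxN
    have hxT : x ∈ T := by
      simp only [hTdef, Set.mem_preimage, hx]; exact hlS
    have : f₀ x = 0 := by
      by_contra hne
      exact hxN ⟨hxT, hne⟩
    simp [this]
  rw [h0] at h1
  exact absurd h1 (by simp)
end
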